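/- Let G be a countably infinite set and let V : G → ℝ be bounded below and satisfy: (a) the image of V has no accumulation point in ℝ, and (b) every level set {z ∈ G : V(z) = x} is finite; enumerate the nonnegative values of V as 0 ≤ r_0 < r_1 < r_2 < ⋯ (an infinite list). Let g : G → ℝ satisfy limsup_{n→∞} (r_n − r_{n−1})^{-1} · max{ |g_z| : z ∈ G, V(z) ∈ [0, r_n] } = 0. Then for all finite S, T ⊆ G with |S| < |T|, one has f_{|S|}(Π_S) = 0 and f_{|S|}(Π_T) ≥ 1. -/

import Mathlib

open MeasureTheory Filter Set

/-- The functional `f_k(Π_U)`: the infimum, over finite `B ⊆ G` with `|B| = k` and bijections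
`φ : G∖B → G∖U` (encoding a bijective matching of `G∖B` with the labelled configuration
`Π_U = {V(w) + g_w : w ∈ G∖U}`), of
`limsup_n (r_n − r_{n−1})⁻¹ · max{ |V(φ(z)) + g_{φ(z)} − V(z)| : z ∈ G∖B, V(z) ∈ [0, r_n] }`,
computed in the extended reals. -/
noncomputable def fk {G : Type*} (V : G → ℝ) (g : G → ℝ) (r : ℕ → ℝ) (k : ℕ)
    (U : Finset G) : EReal :=
  ⨅ (B : {B : Finset G // B.card = k})
    (φ : ((↑(B : Finset G) : Set G)ᶜ : Set G) ≃ ((↑U : Set G)ᶜ : Set G)),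
    Filter.limsup (fun n : ℕ =>
      (((r n - r (n - 1))⁻¹ *
        sSup ((fun w : ((↑(B : Finset G) : Set G)ᶜ : Set G) =>
          |V (φ w).1 + g (φ w).1 - V w.1|) ''
            {w : ((↑(B : Finset G) : Set G)ᶜ : Set G) | V w.1 ∈ Set.Icc 0 (r n)}) : ℝ) : EReal))
      Filter.atTop

lemma finite_range_inter {G : Type*} (V : G → ℝ) (hbdd : BddBelow (Set.range V))
    (hacc : ∀ x : ℝ, ¬ AccPt x (Filter.principal (Set.range V))) (R : ℝ) :
    (Set.range V ∩ Set.Iic R).Finite := by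
  obtain ⟨m, hm⟩ := hbdd
  rw [← Set.not_infinite]
  intro h
  obtain ⟨x, -, hx⟩ := h.exists_accPt_of_subset_isCompact (isCompact_Icc (a := m) (b := R))
    (fun x hx => ⟨hm hx.1, hx.2⟩)
  exact hacc x (hx.mono (principal_mono.2 Set.inter_subset_left))

lemma finite_le {G : Type*} (V : G → ℝ) (hbdd : BddBelow (Set.range V))
    (hacc : ∀ x : ℝ, ¬ AccPt x (Filter.principal (Set.range V)))
    (hlevel : ∀ x : ℝ, {z : G | V z = x}.Finite) (R : ℝ) :
    {z : G | V z ≤ R}.Finite := by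
  have hSv := finite_range_inter V hbdd hacc R
  have hsub : {z : G | V z ≤ R} ⊆ ⋃ x ∈ (Set.range V ∩ Set.Iic R), {z : G | V z = x} :=
    fun z hz => Set.mem_biUnion ⟨⟨z, rfl⟩, hz⟩ rfl
  exact Set.Finite.subset (hSv.biUnion fun x _ => hlevel x) hsub

lemma aux_limsup_nonneg {G : Type*} (V g : G → ℝ) (r : ℕ → ℝ) (hmono : Monotone r)
    (B U : Finset G) (φ : ((↑B : Set G)ᶜ : Set G) ≃ ((↑U : Set G)ᶜ : Set G)) :
    (0:EReal) ≤ Filter.limsup (fun n : ℕ =>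
      (((r n - r (n - 1))⁻¹ *
        sSup ((fun w : ((↑B : Set G)ᶜ : Set G) =>
          |V (φ w).1 + g (φ w).1 - V w.1|) ''
            {w : ((↑B : Set G)ᶜ : Set G) | V w.1 ∈ Set.Icc 0 (r n)}) : ℝ) : EReal))
      Filter.atTop := by
  refine le_trans (le_of_eq (Filter.limsup_const (0:EReal)).symm)
    (Filter.limsup_le_limsup (Filter.Eventually.of_forall fun n => ?_))
  dsimp only
  have h1 : (0:ℝ) ≤ (r n - r (n-1))⁻¹ := inv_nonneg.2 (sub_nonneg.2 (hmono (Nat.sub_le n 1)))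
  have h2 : (0:ℝ) ≤ sSup ((fun w : ((↑B : Set G)ᶜ : Set G) =>
          |V (φ w).1 + g (φ w).1 - V w.1|) ''
            {w : ((↑B : Set G)ᶜ : Set G) | V w.1 ∈ Set.Icc 0 (r n)}) :=
    Real.sSup_nonneg (by rintro x ⟨w, -, rfl⟩; exact abs_nonneg _)
  exact_mod_cast mul_nonneg h1 h2

lemma aux_part2 {G : Type*} (V : G → ℝ)
    (hfin : ∀ R : ℝ, {z : G | V z ≤ R}.Finite)
    (r : ℕ → ℝ) (hr : StrictMono r)
    (hrange : Set.range r = {x : ℝ | x ∈ Set.range V ∧ 0 ≤ x})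
    (htop : Tendsto r atTop atTop)
    (g : G → ℝ)
    (hnoise : Filter.limsup (fun n : ℕ =>
        (((r n - r (n - 1))⁻¹ *
          sSup ((fun z => |g z|) '' {z : G | V z ∈ Set.Icc 0 (r n)}) : ℝ) : EReal))
        Filter.atTop = 0)
    (B T : Finset G) (hBT : B.card < T.card)
    (φ : ((↑B : Set G)ᶜ : Set G) ≃ ((↑T : Set G)ᶜ : Set G)) :
    (1:EReal) ≤ Filter.limsup (fun n : ℕ =>
      (((r n - r (n - 1))⁻¹ *
        sSup ((fun w : ((↑B : Set G)ᶜ : Set G) =>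
          |V (φ w).1 + g (φ w).1 - V w.1|) ''
            {w : ((↑B : Set G)ᶜ : Set G) | V w.1 ∈ Set.Icc 0 (r n)}) : ℝ) : EReal))
      Filter.atTop := by
  classical
  by_contra hcon
  push_neg at hcon
  have hr0 : ∀ n, 0 ≤ r n := fun n => by
    have hmem : r n ∈ Set.range r := ⟨n, rfl⟩
    rw [hrange] at hmem; exact hmem.2
  have hL0 := aux_limsup_nonneg V g r hr.monotone B T φ
  obtain ⟨x, hx1, hx2⟩ := exists_between hcon
  have hxt : x ≠ ⊤ := (hx2.trans_le le_top).ne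
  have hxb : x ≠ ⊥ := ((EReal.bot_lt_zero).trans_le (hL0.trans hx1.le)).ne'
  lift x to ℝ using ⟨hxt, hxb⟩ with c
  have hc1 : c < 1 := by exact_mod_cast hx2
  set ε : ℝ := (1 - c)/2 with hεdef
  have hε : 0 < ε := by rw [hεdef]; linarith
  have hcε : c + ε < 1 := by rw [hεdef]; linarith
  have hev1 := eventually_lt_of_limsup_lt hx1
  have hev2 := eventually_lt_of_limsup_lt (b := (ε : EReal)) (by rw [hnoise]; exact_mod_cast hε)
  obtain ⟨n₀, hn₀⟩ := eventually_atTop.1 ((hev1.and hev2).and (eventually_ge_atTop 1))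
  have hgap : ∀ n, n₀ ≤ n → 0 < r n - r (n-1) := fun n hn =>
    sub_pos.2 (hr (Nat.sub_lt (by have := (hn₀ n hn).2; omega) one_pos))
  -- displacement bound
  have hdisp : ∀ n, n₀ ≤ n → ∀ z : ((↑B : Set G)ᶜ : Set G), V z.1 ∈ Set.Icc 0 (r n) →
      |V (φ z).1 + g (φ z).1 - V z.1| < (r n - r (n-1)) * c := by
    intro n hn z hz
    have h1 : (r n - r (n-1))⁻¹ * sSup ((fun w : ((↑B : Set G)ᶜ : Set G) =>
          |V (φ w).1 + g (φ w).1 - V w.1|) ''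
            {w : ((↑B : Set G)ᶜ : Set G) | V w.1 ∈ Set.Icc 0 (r n)}) < c := by
      exact_mod_cast ((hn₀ n hn).1).1
    have hfinidx : ({w : ((↑B : Set G)ᶜ : Set G) | V w.1 ∈ Set.Icc 0 (r n)}).Finite :=
      Set.Finite.preimage (f := Subtype.val) Subtype.val_injective.injOn
        (((hfin (r n)).subset (fun y hy => hy.2)) : {z : G | V z ∈ Set.Icc 0 (r n)}.Finite)
    have hbdd := (hfinidx.image (fun w : ((↑B : Set G)ᶜ : Set G) =>
          |V (φ w).1 + g (φ w).1 - V w.1|)).bddAbove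
    have hg := hgap n hn
    calc |V (φ z).1 + g (φ z).1 - V z.1| ≤ sSup ((fun w : ((↑B : Set G)ᶜ : Set G) =>
          |V (φ w).1 + g (φ w).1 - V w.1|) ''
            {w : ((↑B : Set G)ᶜ : Set G) | V w.1 ∈ Set.Icc 0 (r n)}) :=
        le_csSup hbdd ⟨z, hz, rfl⟩
      _ = (r n - r (n-1)) * ((r n - r (n-1))⁻¹ * sSup _) := (mul_inv_cancel_left₀ hg.ne' _).symm
      _ < (r n - r (n-1)) * c := mul_lt_mul_of_pos_left h1 hg
  -- noise bound
  have hgbd : ∀ n, n₀ ≤ n → ∀ w : G, V w ∈ Set.Icc 0 (r n) →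
      |g w| < (r n - r (n-1)) * ε := by
    intro n hn w hw
    have h1 : (r n - r (n-1))⁻¹ * sSup ((fun z => |g z|) '' {z : G | V z ∈ Set.Icc 0 (r n)})
        < ε := by exact_mod_cast ((hn₀ n hn).1).2
    have hbdd := ((((hfin (r n)).subset (fun y hy => hy.2)) :
      {z : G | V z ∈ Set.Icc 0 (r n)}.Finite).image (fun z => |g z|)).bddAbove
    have hg := hgap n hn
    calc |g w| ≤ sSup ((fun z => |g z|) '' {z : G | V z ∈ Set.Icc 0 (r n)}) :=
        le_csSup hbdd ⟨w, hw, rfl⟩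
      _ = (r n - r (n-1)) * ((r n - r (n-1))⁻¹ * sSup _) := (mul_inv_cancel_left₀ hg.ne' _).symm
      _ < (r n - r (n-1)) * ε := mul_lt_mul_of_pos_left h1 hg
  -- key lemma A
  have hA : ∀ n, n₀ ≤ n → ∀ z : ((↑B : Set G)ᶜ : Set G), V z.1 ∈ Set.Icc 0 (r n) →
      V (φ z).1 ≤ r n := by
    intro n hn z hz
    by_contra hgt
    push_neg at hgt
    have h0 : 0 ≤ V (φ z).1 := (hr0 n).trans hgt.le
    have hmem : V (φ z).1 ∈ Set.range r := by rw [hrange]; exact ⟨⟨_, rfl⟩, h0⟩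
    obtain ⟨j, hj⟩ := hmem
    have hnj : n < j := hr.lt_iff_lt.1 (by rw [hj]; exact hgt)
    have hnj0 : n₀ ≤ j := hn.trans hnj.le
    have hzj : V z.1 ∈ Set.Icc 0 (r j) := ⟨hz.1, hz.2.trans (hr.monotone hnj.le)⟩
    have hd := hdisp j hnj0 z hzj
    have hgw := hgbd j hnj0 (φ z).1 ⟨h0, hj.ge⟩
    have hzj1 : V z.1 ≤ r (j-1) := hz.2.trans (hr.monotone (by omega))
    have hgapj := hgap j hnj0
    rw [abs_lt] at hd hgw
    have hprod : (r j - r (j-1)) * (c + ε) < (r j - r (j-1)) * 1 :=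
      mul_lt_mul_of_pos_left hcε hgapj
    have e1 : (r j - r (j-1)) * (c + ε) = (r j - r (j-1))*c + (r j - r (j-1))*ε := by ring
    have e2 : (r j - r (j-1)) * 1 = r j - r (j-1) := by ring
    rw [← hj] at hd
    linarith [hd.2, hgw.1, hzj1, hprod, e1, e2]
  -- negative part
  have hnegfin : {z : ((↑B : Set G)ᶜ : Set G) | V z.1 < 0}.Finite :=
    Set.Finite.preimage (f := Subtype.val) Subtype.val_injective.injOn
      (((hfin 0).subset (fun y (hy : V y < 0) => hy.le)) : {z : G | V z < 0}.Finite)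
  obtain ⟨R₁, hR₁⟩ := (hnegfin.image (fun z => V (φ z).1)).bddAbove
  obtain ⟨R₂, hR₂⟩ := (((B ∪ T).finite_toSet).image V).bddAbove
  obtain ⟨n₁, hn₁⟩ := eventually_atTop.1
    ((htop.eventually_ge_atTop (max R₁ R₂)).and (eventually_ge_atTop n₀))
  have hrn₁ : max R₁ R₂ ≤ r n₁ := (hn₁ n₁ le_rfl).1
  have hn₀n₁ : n₀ ≤ n₁ := (hn₁ n₁ le_rfl).2
  have hBL : B ⊆ (hfin (r n₁)).toFinset := by
    intro b hb
    rw [Set.Finite.mem_toFinset]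
    exact le_trans (le_trans (hR₂ ⟨b, by simp [hb], rfl⟩) (le_max_right R₁ R₂)) hrn₁
  have hTL : T ⊆ (hfin (r n₁)).toFinset := by
    intro b hb
    rw [Set.Finite.mem_toFinset]
    exact le_trans (le_trans (hR₂ ⟨b, by simp [hb], rfl⟩) (le_max_right R₁ R₂)) hrn₁
  have hinj : ((hfin (r n₁)).toFinset \ B).card ≤ ((hfin (r n₁)).toFinset \ T).card := by
    refine Finset.card_le_card_of_injOn
      (fun z => if h : z ∈ ((↑B : Set G)ᶜ : Set G) then ((φ ⟨z, h⟩ : ((↑T : Set G)ᶜ : Set G)) : G) else z) ?_ ?_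
    · intro z hz
      rw [Finset.mem_coe, Finset.mem_sdiff] at hz
      have hzB : z ∈ ((↑B : Set G)ᶜ : Set G) := by simpa using hz.2
      dsimp only
      rw [dif_pos hzB, Finset.mem_coe, Finset.mem_sdiff]
      refine ⟨?_, fun hmem => (φ ⟨z, hzB⟩).2 (Finset.mem_coe.2 hmem)⟩
      rw [Set.Finite.mem_toFinset]
      rcases lt_or_ge (V z) 0 with hneg | hpos
      · calc V (φ ⟨z, hzB⟩).1 ≤ R₁ := hR₁ ⟨⟨z, hzB⟩, hneg, rfl⟩
          _ ≤ r n₁ := le_trans (le_max_left _ _) hrn₁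
      · exact hA n₁ hn₀n₁ ⟨z, hzB⟩ ⟨hpos, ((hfin (r n₁)).mem_toFinset).1 hz.1⟩
    · intro a ha b hb hab
      rw [Finset.mem_coe, Finset.mem_sdiff] at ha hb
      have haB : a ∈ ((↑B : Set G)ᶜ : Set G) := by simpa using ha.2
      have hbB : b ∈ ((↑B : Set G)ᶜ : Set G) := by simpa using hb.2
      dsimp only at hab
      rw [dif_pos haB, dif_pos hbB] at hab
      exact congrArg Subtype.val (φ.injective (Subtype.ext hab))
  rw [Finset.card_sdiff_of_subset hBL, Finset.card_sdiff_of_subset hTL] at hinj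
  have h1 := Finset.card_le_card hBL
  have h2 := Finset.card_le_card hTL
  omega

/-- If `V` is bounded below with no accumulation point in its image and finite level sets,
nonnegative values enumerated `0 ≤ r_0 < r_1 < ⋯`, and the noise satisfies
`limsup_n (r_n − r_{n−1})⁻¹ · max{|g_z| : V(z) ∈ [0, r_n]} = 0`, then for all finite `S`, `T`
with `|S| < |T|` one has `f_{|S|}(Π_S) = 0` and `f_{|S|}(Π_T) ≥ 1`. -/
theorem fk_distinguishes_deletions
    {G : Type*} [Countable G] [Infinite G]
    (V : G → ℝ) (hbdd : BddBelow (Set.range V))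
    (hacc : ∀ x : ℝ, ¬ AccPt x (Filter.principal (Set.range V)))
    (hlevel : ∀ x : ℝ, {z : G | V z = x}.Finite)
    (r : ℕ → ℝ) (hr : StrictMono r)
    (hrange : Set.range r = {x : ℝ | x ∈ Set.range V ∧ 0 ≤ x})
    (g : G → ℝ)
    (hnoise : Filter.limsup (fun n : ℕ =>
        (((r n - r (n - 1))⁻¹ *
          sSup ((fun z => |g z|) '' {z : G | V z ∈ Set.Icc 0 (r n)}) : ℝ) : EReal))
        Filter.atTop = 0) :
    ∀ S T : Finset G, S.card < T.card →
      fk V g r S.card S = 0 ∧ 1 ≤ fk V g r S.card T := by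
  have hfin : ∀ R : ℝ, {z : G | V z ≤ R}.Finite := finite_le V hbdd hacc hlevel
  have htop : Tendsto r atTop atTop := by
    refine hr.monotone.tendsto_atTop_atTop fun b => ?_
    by_contra h
    push_neg at h
    have hinf : (Set.range r).Infinite := Set.infinite_range_of_injective hr.injective
    have hsub : Set.range r ⊆ Set.range V ∩ Set.Iic b := by
      rintro x ⟨n, rfl⟩
      have hmem : r n ∈ Set.range r := ⟨n, rfl⟩
      rw [hrange] at hmem
      exact ⟨hmem.1, (h n).le⟩
    exact hinf (Set.Finite.subset (finite_range_inter V hbdd hacc b) hsub)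
  intro S T hST
  constructor
  · refine le_antisymm ?_ ?_
    · unfold fk
      refine iInf_le_of_le ⟨S, rfl⟩ (iInf_le_of_le (Equiv.refl _) ?_)
      rw [← hnoise]
      refine Filter.limsup_le_limsup (Filter.Eventually.of_forall fun n => ?_)
      dsimp only
      have h1 : (0:ℝ) ≤ (r n - r (n-1))⁻¹ :=
        inv_nonneg.2 (sub_nonneg.2 (hr.monotone (Nat.sub_le n 1)))
      have hbig : BddAbove ((fun z => |g z|) '' {z : G | V z ∈ Set.Icc 0 (r n)}) :=
        (((hfin (r n)).subset (fun z hz => hz.2)).image _).bddAbove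
      have h2 : sSup ((fun w : ((↑(S : Finset G) : Set G)ᶜ : Set G) =>
            |V ((Equiv.refl _) w).1 + g ((Equiv.refl _) w).1 - V w.1|) ''
              {w : ((↑(S : Finset G) : Set G)ᶜ : Set G) | V w.1 ∈ Set.Icc 0 (r n)})
          ≤ sSup ((fun z => |g z|) '' {z : G | V z ∈ Set.Icc 0 (r n)}) := by
        refine Real.sSup_le ?_ (Real.sSup_nonneg (by rintro x ⟨w, -, rfl⟩; exact abs_nonneg _))
        rintro x ⟨w, hw, rfl⟩
        refine le_trans (le_of_eq (by simp)) (le_csSup hbig ⟨w.1, hw, rfl⟩)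
      exact_mod_cast mul_le_mul_of_nonneg_left h2 h1
    · unfold fk
      exact le_iInf fun B => le_iInf fun φ => aux_limsup_nonneg V g r hr.monotone _ _ φ
  · unfold fk
    refine le_iInf fun B => le_iInf fun φ => ?_
    exact aux_part2 V hfin r hr hrange htop g hnoise (B : Finset G) T
      (by rw [B.2]; exact hST) φ
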